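/- Let u : Γ₁ → Γ be a group homomorphism, M a finite-index subgroup of Γ, and M₁ = u⁻¹(M). Then [Γ₁ : M₁] ≤ [Γ : M]. If moreover u induces an isomorphism of profinite completions (i.e. for every finite group F the map Hom(Γ, F) → Hom(Γ₁, F), φ ↦ φ ∘ u, is bijective), then [Γ₁ : M₁] = [Γ : M]. -/

import Mathlib

open QuotientGroup

private def optionPermHom (X : Type) : Equiv.Perm X →* Equiv.Perm (Option X) where
  toFun := Equiv.optionCongr
  map_one' := Equiv.optionCongr_one
  map_mul' := fun a b => by
    ext x
    cases x <;> simp [Equiv.Perm.mul_def, ← Equiv.optionCongr_trans]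

private lemma swap_commute {X : Type} [DecidableEq X] (a b : X) (f : Equiv.Perm X)
    (ha : f a = a) (hb : f b = b) : Equiv.swap a b * f * (Equiv.swap a b)⁻¹ = f := by
  ext x
  simp only [Equiv.Perm.mul_apply, Equiv.swap_inv]
  rcases eq_or_ne x a with rfl | hxa
  · simp [Equiv.swap_apply_left, hb, ha]
  rcases eq_or_ne x b with rfl | hxb
  · simp [Equiv.swap_apply_right, ha, hb]
  · rw [Equiv.swap_apply_of_ne_of_ne hxa hxb]
    rcases eq_or_ne (f x) a with h | h
    · have : x = a := f.injective (by rw [h, ha])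
      exact absurd this hxa
    rcases eq_or_ne (f x) b with h' | h'
    · have : x = b := f.injective (by rw [h', hb])
      exact absurd this hxb
    · rw [Equiv.swap_apply_of_ne_of_ne h h']

/-- If precomposition with `u` is injective on homs to every finite group, then for
every finite group `F` and surjective hom `φ : Γ →* F`, `φ ∘ u` is surjective. -/
private lemma dense_of_inj {Γ₁ Γ : Type} [Group Γ₁] [Group Γ] (u : Γ₁ →* Γ)
    (hu : ∀ (F : Type) [Group F] [Finite F],
        Function.Injective (fun φ : Γ →* F => φ.comp u))
    (F : Type) [Group F] [Finite F] (φ : Γ →* F) (hφ : Function.Surjective φ) :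
    Function.Surjective (φ.comp u) := by
  classical
  set H : Subgroup F := (φ.comp u).range with hH
  haveI := Fintype.ofFinite (F ⧸ H)
  let X := Option (F ⧸ H)
  haveI : Finite X := by dsimp only [X]; infer_instance
  let α : F →* Equiv.Perm X :=
    (optionPermHom (F ⧸ H)).comp (MulAction.toPermHom F (F ⧸ H))
  let τ : Equiv.Perm X := Equiv.swap (some ((1 : F) : F ⧸ H)) none
  let β : F →* Equiv.Perm X := (MulAut.conj τ).toMonoidHom.comp α
  have key : ∀ g : F, g ∈ H → α g = β g := by
    intro g hg
    have h1 : α g (some ((1 : F) : F ⧸ H)) = some ((1 : F) : F ⧸ H) := by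
      show some (g • ((1 : F) : F ⧸ H)) = _
      congr 1
      rw [MulAction.Quotient.smul_mk]
      exact (QuotientGroup.eq).2 (by simpa using hg)
    have h2 : α g none = none := rfl
    exact (swap_commute _ _ _ h1 h2).symm
  have hαβ : α.comp φ = β.comp φ := by
    apply hu (Equiv.Perm X)
    refine MonoidHom.ext fun x => ?_
    exact key (φ (u x)) ⟨x, rfl⟩
  rintro g
  obtain ⟨y, rfl⟩ := hφ g
  -- show φ y ∈ H by evaluating the equal homs at `none`
  have h : α (φ y) none = β (φ y) none := by
    rw [show α (φ y) = (α.comp φ) y from rfl, hαβ]; rfl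
  have h2 : α (φ y) none = none := rfl
  have hτ : τ⁻¹ none = some ((1 : F) : F ⧸ H) := by
    rw [Equiv.swap_inv]; exact Equiv.swap_apply_right _ _
  have h3 : β (φ y) none = τ (α (φ y) (some ((1 : F) : F ⧸ H))) := by
    show (τ * α (φ y) * τ⁻¹) none = _
    rw [Equiv.Perm.mul_apply, Equiv.Perm.mul_apply, hτ]
  have h4 : α (φ y) (some ((1 : F) : F ⧸ H)) = some ((φ y • ((1 : F) : F ⧸ H))) := rfl
  rw [h2, h3, h4] at h
  have h5 : (some (φ y • ((1 : F) : F ⧸ H)) : X) = some ((1 : F) : F ⧸ H) := by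
    by_contra hne
    rw [Equiv.swap_apply_of_ne_of_ne hne (Option.some_ne_none _)] at h
    exact Option.some_ne_none _ h.symm
  have h6 : (φ y • ((1 : F) : F ⧸ H)) = ((1 : F) : F ⧸ H) := Option.some_injective _ h5
  rw [MulAction.Quotient.smul_mk] at h6
  have hy : φ y ∈ H := by simpa using (QuotientGroup.eq).1 h6.symm
  obtain ⟨x, hx⟩ := hy
  exact ⟨x, hx⟩

theorem index_comap_le_and_eq {Γ₁ Γ : Type} [Group Γ₁] [Group Γ] (u : Γ₁ →* Γ)
    (M : Subgroup Γ) (hM : M.FiniteIndex) :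
    Cardinal.mk (Γ₁ ⧸ M.comap u) ≤ Cardinal.mk (Γ ⧸ M) ∧
    ((∀ (F : Type) [Group F] [Finite F],
        Function.Bijective (fun φ : Γ →* F => φ.comp u)) →
      Cardinal.mk (Γ₁ ⧸ M.comap u) = Cardinal.mk (Γ ⧸ M)) := by
  classical
  -- the induced map on coset spaces
  let f : Γ₁ ⧸ M.comap u → Γ ⧸ M :=
    Quotient.map' u (fun a b hab => by
      rw [QuotientGroup.leftRel_apply] at hab ⊢
      simpa using hab)
  have hfinj : Function.Injective f := by
    intro x y
    refine Quotient.inductionOn₂' x y (fun a b h => ?_)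
    apply Quotient.sound'
    have h' := Quotient.exact' h
    rw [QuotientGroup.leftRel_apply] at h' ⊢
    simpa using h'
  refine ⟨Cardinal.mk_le_of_injective hfinj, fun hbij => ?_⟩
  -- surjectivity
  haveI := hM
  set N := M.normalCore
  haveI : N.FiniteIndex := Subgroup.finiteIndex_normalCore M
  haveI : Finite (Γ ⧸ N) := Subgroup.finite_quotient_of_finiteIndex
  have hsurj : Function.Surjective ((QuotientGroup.mk' N).comp u) :=
    dense_of_inj u (fun F _ _ => (hbij F).1) _ (QuotientGroup.mk' N)
      (QuotientGroup.mk'_surjective N)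
  have hfsurj : Function.Surjective f := by
    intro y
    refine Quotient.inductionOn' y (fun g => ?_)
    obtain ⟨x, hx⟩ := hsurj (QuotientGroup.mk g)
    refine ⟨Quotient.mk'' x, ?_⟩
    show Quotient.mk'' (u x) = Quotient.mk'' g
    apply Quotient.sound'
    rw [QuotientGroup.leftRel_apply]
    have : (u x)⁻¹ * g ∈ N := by
      have := (QuotientGroup.eq).1 (hx : ((u x : Γ) : Γ ⧸ N) = (g : Γ ⧸ N))
      exact this
    exact M.normalCore_le this
  exact Cardinal.mk_congr (Equiv.ofBijective f ⟨hfinj, hfsurj⟩)
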